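/- Let γ>1 and consider discrete mesh data for one time step n→n+1. For each cell K let ρ_K^{n}, ρ_K^{n+1}, e_K^{n}, e_K^{n+1} > 0, and for each internal face f let ρ_f^{n+1} > 0 and e_f^{n+1} > 0; set F_{K,f}^{n+1} = |σ_f|·ρ_f^{n+1}·u_{K,f}^{n+1} and p_K^{n+1} = (γ−1)·ρ_K^{n+1}·e_K^{n+1}. Assume: (i) for each cell K the mass balance (|K|/δt)(ρ_K^{n+1}−ρ_K^{n}) + Σ_{f∈E(K)} F_{K,f}^{n+1} = 0; (ii) for each cell K the internal energy inequality (|K|/δt)(ρ_K^{n+1}e_K^{n+1}−ρ_K^{n}e_K^{n}) + Σ_{f∈E(K)} F_{K,f}^{n+1}·e_f^{n+1} + p_K^{n+1}·Σ_{f∈E(K)} |σ_f|·u_{K,f}^{n+1} ≥ 0; (iii) for each face f, ρ_f^{n+1} ∈ [[ρ_{K_f}^{n+1}, ρ_{KL,f}^{n+1}]] if u_f^{n+1} ≥ 0 and ρ_f^{n+1} ∈ [[ρ_{L_f}^{n+1}, ρ_{KL,f}^{n+1}]] otherwise, where ρ_{KL,f}^{n+1} is the tangent-intersection point of φ_ρ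 at ρ_{K_f}^{n+1} and ρ_{L_f}^{n+1}; (iv) the analogous condition for e_f^{n+1} with the tangent-intersection point e_{KL,f}^{n+1} of φ_e at e_{K_f}^{n+1} and e_{L_f}^{n+1}. Then, with η_K^{m} = φ_ρ(ρ_K^{m}) + ρ_K^{m}·φ_e(e_K^{m}), the global entropy estimate Σ_{K∈C} |K|·η_K^{n+1} ≤ Σ_{K∈C} |K|·η_K^{n} holds. -/

import Mathlib

/-- `φ_ρ(z) = z log z`. -/
noncomputable def phiRho (z : ℝ) : ℝ := z * Real.log z

/-- `φ_ρ'(z) = log z + 1`. -/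
noncomputable def phiRho' (z : ℝ) : ℝ := Real.log z + 1

/-- `φ_e(z) = -log z / (γ-1)`. -/
noncomputable def phiE (γ z : ℝ) : ℝ := -Real.log z / (γ - 1)

/-- `φ_e'(z) = -1/((γ-1) z)`. -/
noncomputable def phiE' (γ z : ℝ) : ℝ := -1 / ((γ - 1) * z)

/-- The set `E(K)` of faces incident to the cell `K`. -/
def cellFaces {Cell Face : Type*} [Fintype Face] [DecidableEq Cell]
    (Kf Lf : Face → Cell) (Kc : Cell) : Finset Face :=
  Finset.univ.filter (fun f => Kf f = Kc ∨ Lf f = Kc)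

/-- Oriented normal velocity `u_{K,f}`. -/
def orientedVel {Cell Face : Type*} [DecidableEq Cell]
    (Kf : Face → Cell) (uf : Face → ℝ) (Kc : Cell) (f : Face) : ℝ :=
  if Kf f = Kc then uf f else -uf f


section EntropyAux

lemma lin_nonneg {m c a b y : ℝ} (ha : 0 ≤ m * a + c) (hb : 0 ≤ m * b + c)
    (hy : y ∈ Set.uIcc a b) : 0 ≤ m * y + c := by
  rw [Set.mem_uIcc] at hy
  rcases hy with ⟨h1, h2⟩ | ⟨h1, h2⟩ <;> rcases le_or_gt 0 m with hm | hm
  · nlinarith [mul_le_mul_of_nonneg_left h1 hm]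
  · nlinarith [mul_le_mul_of_nonpos_left h2 hm.le]
  · nlinarith [mul_le_mul_of_nonneg_left h1 hm]
  · nlinarith [mul_le_mul_of_nonpos_left h2 hm.le]

lemma tangent_cmp (φ φ' : ℝ → ℝ) {xK xL xKL y : ℝ}
    (htK : φ xL + φ' xL * (xK - xL) ≤ φ xK)
    (hKL : xK ≠ xL → φ xK + φ' xK * (xKL - xK) = φ xL + φ' xL * (xKL - xL))
    (hy : y ∈ Set.uIcc xK xKL) :
    φ xL + φ' xL * (y - xL) ≤ φ xK + φ' xK * (y - xK) := by
  by_cases hx : xK = xL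
  · rw [hx]
  · have he := hKL hx
    have key : 0 ≤ (φ' xK - φ' xL) * y + ((φ xK - φ' xK * xK) - (φ xL - φ' xL * xL)) := by
      apply lin_nonneg (a := xK) (b := xKL) _ _ hy
      · nlinarith [htK]
      · nlinarith [he]
    nlinarith [key]

lemma phiRho_tangent_le {a b : ℝ} (ha : 0 < a) (hb : 0 < b) :
    phiRho b + phiRho' b * (a - b) ≤ phiRho a := by
  have h := Real.log_le_sub_one_of_pos (div_pos hb ha)
  rw [Real.log_div hb.ne' ha.ne'] at h
  have h2 : a * (Real.log b - Real.log a) ≤ a * (b / a - 1) :=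
    mul_le_mul_of_nonneg_left h ha.le
  have h3 : a * (b / a - 1) = b - a := by field_simp
  simp only [phiRho, phiRho']
  nlinarith [h2, h3]

lemma phiE_tangent_le {γ a b : ℝ} (hγ : 1 < γ) (ha : 0 < a) (hb : 0 < b) :
    phiE γ b + phiE' γ b * (a - b) ≤ phiE γ a := by
  have hg : 0 < γ - 1 := by linarith
  have h := Real.log_le_sub_one_of_pos (div_pos ha hb)
  rw [Real.log_div ha.ne' hb.ne'] at h
  have key : -Real.log b + -((a - b) / b) ≤ -Real.log a := by
    have : (a - b) / b = a / b - 1 := by field_simp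
    linarith [h, this]
  have e1 : phiE' γ b * (a - b) = (-((a - b) / b)) / (γ - 1) := by
    simp only [phiE']
    field_simp
  simp only [phiE, e1, ← add_div]
  gcongr

lemma sum_swap_faces {Cell Face : Type*} [Fintype Cell] [Fintype Face] [DecidableEq Cell]
    (Kf Lf : Face → Cell) (hKL : ∀ f, Kf f ≠ Lf f) (g : Cell → Face → ℝ) :
    ∑ Kc : Cell, ∑ f ∈ cellFaces Kf Lf Kc, g Kc f
      = ∑ f : Face, (g (Kf f) f + g (Lf f) f) := by
  unfold cellFaces
  simp only [Finset.sum_filter]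
  rw [Finset.sum_comm]
  refine Finset.sum_congr rfl fun f _ => ?_
  have step : ∀ Kc : Cell, (if Kf f = Kc ∨ Lf f = Kc then g Kc f else 0)
      = (if Kf f = Kc then g Kc f else 0) + (if Lf f = Kc then g Kc f else 0) := by
    intro Kc
    by_cases h1 : Kf f = Kc <;> by_cases h2 : Lf f = Kc
    · exact absurd (h1.trans h2.symm) (hKL f)
    · simp [h1, h2]
    · simp [h1, h2]
    · simp [h1, h2]
  rw [Finset.sum_congr rfl fun Kc _ => step Kc, Finset.sum_add_distrib,
    Finset.sum_ite_eq, Finset.sum_ite_eq]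
  simp

end EntropyAux

/-- Global entropy estimate for one time step of the implicit reduced-diffusion
scheme (Theorem 2.12): under the limitation assumptions `(H_ρ^imp)` and `(H_e^imp)`,
the total entropy `Σ_K |K| η_K` does not increase. -/
theorem implicit_reduced_diffusion_global_entropy
    (γ : ℝ) (hγ : 1 < γ)
    (Cell Face : Type*) [Fintype Cell] [Fintype Face] [DecidableEq Cell]
    (Kf Lf : Face → Cell) (hKL : ∀ f, Kf f ≠ Lf f)
    (area : Face → ℝ) (harea : ∀ f, 0 < area f)
    (measK : Cell → ℝ) (hmeas : ∀ Kc, 0 < measK Kc)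
    (δt : ℝ) (hδt : 0 < δt)
    (uf : Face → ℝ)
    (ρ0 ρ1 e0 e1 : Cell → ℝ)
    (hρ0 : ∀ Kc, 0 < ρ0 Kc) (hρ1 : ∀ Kc, 0 < ρ1 Kc)
    (he0 : ∀ Kc, 0 < e0 Kc) (he1 : ∀ Kc, 0 < e1 Kc)
    (ρf ef : Face → ℝ) (hρf : ∀ f, 0 < ρf f) (hef : ∀ f, 0 < ef f)
    (ρKL eKL : Face → ℝ)
    (hρKLmem : ∀ f, ρKL f ∈ Set.uIcc (ρ1 (Kf f)) (ρ1 (Lf f)))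
    (hρKLtan : ∀ f, ρ1 (Kf f) ≠ ρ1 (Lf f) →
      phiRho (ρ1 (Kf f)) + phiRho' (ρ1 (Kf f)) * (ρKL f - ρ1 (Kf f))
        = phiRho (ρ1 (Lf f)) + phiRho' (ρ1 (Lf f)) * (ρKL f - ρ1 (Lf f)))
    (hρKLeq : ∀ f, ρ1 (Kf f) = ρ1 (Lf f) → ρKL f = ρ1 (Kf f))
    (heKLmem : ∀ f, eKL f ∈ Set.uIcc (e1 (Kf f)) (e1 (Lf f)))
    (heKLtan : ∀ f, e1 (Kf f) ≠ e1 (Lf f) →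
      phiE γ (e1 (Kf f)) + phiE' γ (e1 (Kf f)) * (eKL f - e1 (Kf f))
        = phiE γ (e1 (Lf f)) + phiE' γ (e1 (Lf f)) * (eKL f - e1 (Lf f)))
    (heKLeq : ∀ f, e1 (Kf f) = e1 (Lf f) → eKL f = e1 (Kf f))
    (hρface₁ : ∀ f, 0 ≤ uf f → ρf f ∈ Set.uIcc (ρ1 (Kf f)) (ρKL f))
    (hρface₂ : ∀ f, uf f < 0 → ρf f ∈ Set.uIcc (ρ1 (Lf f)) (ρKL f))
    (heface₁ : ∀ f, 0 ≤ uf f → ef f ∈ Set.uIcc (e1 (Kf f)) (eKL f))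
    (heface₂ : ∀ f, uf f < 0 → ef f ∈ Set.uIcc (e1 (Lf f)) (eKL f))
    (hmass : ∀ Kc, measK Kc / δt * (ρ1 Kc - ρ0 Kc)
        + ∑ f ∈ cellFaces Kf Lf Kc, area f * ρf f * orientedVel Kf uf Kc f = 0)
    (henergy : ∀ Kc, 0 ≤ measK Kc / δt * (ρ1 Kc * e1 Kc - ρ0 Kc * e0 Kc)
        + ∑ f ∈ cellFaces Kf Lf Kc, (area f * ρf f * orientedVel Kf uf Kc f) * ef f
        + ((γ - 1) * ρ1 Kc * e1 Kc) *
            ∑ f ∈ cellFaces Kf Lf Kc, area f * orientedVel Kf uf Kc f) :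
    ∑ Kc : Cell, measK Kc * (phiRho (ρ1 Kc) + ρ1 Kc * phiE γ (e1 Kc))
      ≤ ∑ Kc : Cell, measK Kc * (phiRho (ρ0 Kc) + ρ0 Kc * phiE γ (e0 Kc)) := by
  classical
  -- the face flux coefficient function
  set g : Cell → Face → ℝ := fun Kc f => area f * orientedVel Kf uf Kc f *
      (ρf f * (-(phiRho' (ρ1 Kc)) - phiE γ (e1 Kc) + e1 Kc * phiE' γ (e1 Kc))
        - phiE' γ (e1 Kc) * ρf f * ef f + ρ1 Kc) with hg
  -- Step 1: per-cell entropy estimate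
  have cellB : ∀ Kc : Cell, measK Kc / δt *
      ((phiRho (ρ1 Kc) + ρ1 Kc * phiE γ (e1 Kc)) - (phiRho (ρ0 Kc) + ρ0 Kc * phiE γ (e0 Kc)))
      ≤ ∑ f ∈ cellFaces Kf Lf Kc, g Kc f := by
    intro Kc
    set sf := ∑ f ∈ cellFaces Kf Lf Kc, area f * ρf f * orientedVel Kf uf Kc f with hsf
    set se := ∑ f ∈ cellFaces Kf Lf Kc, (area f * ρf f * orientedVel Kf uf Kc f) * ef f with hse
    set su := ∑ f ∈ cellFaces Kf Lf Kc, area f * orientedVel Kf uf Kc f with hsu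
    have hgsum : ∑ f ∈ cellFaces Kf Lf Kc, g Kc f
        = (-(phiRho' (ρ1 Kc)) - phiE γ (e1 Kc) + e1 Kc * phiE' γ (e1 Kc)) * sf
          + (-(phiE' γ (e1 Kc))) * se + ρ1 Kc * su := by
      rw [hsf, hse, hsu, Finset.mul_sum, Finset.mul_sum, Finset.mul_sum,
        ← Finset.sum_add_distrib, ← Finset.sum_add_distrib]
      refine Finset.sum_congr rfl fun f _ => ?_
      simp only [hg]
      ring
    rw [hgsum]
    have hm : (0:ℝ) < measK Kc / δt := div_pos (hmeas Kc) hδt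
    have t1 := phiRho_tangent_le (hρ0 Kc) (hρ1 Kc)
    have t2 := phiE_tangent_le hγ (he0 Kc) (he1 Kc)
    have hA : measK Kc / δt * (ρ1 Kc - ρ0 Kc) + sf = 0 := by rw [hsf]; exact hmass Kc
    have hB : 0 ≤ measK Kc / δt * (ρ1 Kc * e1 Kc - ρ0 Kc * e0 Kc) + se
        + ((γ - 1) * ρ1 Kc * e1 Kc) * su := by rw [hse, hsu]; exact henergy Kc
    have hA' : measK Kc / δt * (ρ1 Kc - ρ0 Kc) = -sf := by linarith
    have hpe : phiE' γ (e1 Kc) ≤ 0 := by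
      have : 0 < (γ - 1) * e1 Kc := mul_pos (by linarith) (he1 Kc)
      have := div_neg_of_neg_of_pos (show (-1:ℝ) < 0 by norm_num) this
      simpa [phiE'] using this.le
    have h1 : measK Kc / δt * (phiRho (ρ1 Kc) - phiRho (ρ0 Kc)) ≤ phiRho' (ρ1 Kc) * (-sf) := by
      have hx := mul_le_mul_of_nonneg_left
        (show phiRho (ρ1 Kc) - phiRho (ρ0 Kc) ≤ phiRho' (ρ1 Kc) * (ρ1 Kc - ρ0 Kc) by linarith)
        hm.le
      calc measK Kc / δt * (phiRho (ρ1 Kc) - phiRho (ρ0 Kc))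
          ≤ measK Kc / δt * (phiRho' (ρ1 Kc) * (ρ1 Kc - ρ0 Kc)) := hx
        _ = phiRho' (ρ1 Kc) * (measK Kc / δt * (ρ1 Kc - ρ0 Kc)) := by ring
        _ = phiRho' (ρ1 Kc) * (-sf) := by rw [hA']
    have h2b := mul_le_mul_of_nonneg_left
      (show phiE γ (e1 Kc) - phiE γ (e0 Kc) ≤ phiE' γ (e1 Kc) * (e1 Kc - e0 Kc) by linarith)
      (mul_pos hm (hρ0 Kc)).le
    have h2d : phiE' γ (e1 Kc) * (measK Kc / δt * (ρ1 Kc * e1 Kc - ρ0 Kc * e0 Kc))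
        ≤ phiE' γ (e1 Kc) * (-se - ((γ - 1) * ρ1 Kc * e1 Kc) * su) :=
      mul_le_mul_of_nonpos_left (by linarith) hpe
    have br1 : phiE γ (e1 Kc) * (measK Kc / δt * (ρ1 Kc - ρ0 Kc))
        = phiE γ (e1 Kc) * (-sf) := by rw [hA']
    have br2 : (phiE' γ (e1 Kc) * e1 Kc) * (measK Kc / δt * (ρ1 Kc - ρ0 Kc))
        = (phiE' γ (e1 Kc) * e1 Kc) * (-sf) := by rw [hA']
    have hpp2 : phiE' γ (e1 Kc) * (((γ - 1) * ρ1 Kc * e1 Kc) * su) = -(ρ1 Kc) * su := by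
      have hne : (γ - 1) * e1 Kc ≠ 0 := (mul_pos (by linarith) (he1 Kc)).ne'
      simp only [phiE']
      rw [div_mul_eq_mul_div, div_eq_iff hne]
      ring
    nlinarith [h1, h2b, h2d, br1, br2, hpp2]
  -- Step 2: per-face nonpositivity
  have faceB : ∀ f : Face, g (Kf f) f + g (Lf f) f ≤ 0 := by
    intro f
    have o1 : orientedVel Kf uf (Kf f) f = uf f := by simp [orientedVel]
    have o2 : orientedVel Kf uf (Lf f) f = -uf f := by simp [orientedVel, hKL f]
    have zK : ρ1 (Kf f) * phiRho' (ρ1 (Kf f)) - phiRho (ρ1 (Kf f)) = ρ1 (Kf f) := by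
      simp only [phiRho, phiRho']; ring
    have zL : ρ1 (Lf f) * phiRho' (ρ1 (Lf f)) - phiRho (ρ1 (Lf f)) = ρ1 (Lf f) := by
      simp only [phiRho, phiRho']; ring
    simp only [hg, o1, o2]
    rcases le_or_gt 0 (uf f) with hu | hu
    · have cρ : phiRho (ρ1 (Lf f)) + phiRho' (ρ1 (Lf f)) * (ρf f - ρ1 (Lf f))
          ≤ phiRho (ρ1 (Kf f)) + phiRho' (ρ1 (Kf f)) * (ρf f - ρ1 (Kf f)) :=
        tangent_cmp phiRho phiRho' (phiRho_tangent_le (hρ1 (Kf f)) (hρ1 (Lf f)))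
          (hρKLtan f) (hρface₁ f hu)
      have ce : phiE γ (e1 (Lf f)) + phiE' γ (e1 (Lf f)) * (ef f - e1 (Lf f))
          ≤ phiE γ (e1 (Kf f)) + phiE' γ (e1 (Kf f)) * (ef f - e1 (Kf f)) :=
        tangent_cmp (phiE γ) (phiE' γ) (phiE_tangent_le hγ (he1 (Kf f)) (he1 (Lf f)))
          (heKLtan f) (heface₁ f hu)
      have hAu : 0 ≤ area f * uf f := mul_nonneg (harea f).le hu
      nlinarith [mul_nonneg hAu (hρf f).le, mul_nonneg hAu (sub_nonneg.2 cρ),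
        mul_nonneg (mul_nonneg hAu (hρf f).le) (sub_nonneg.2 ce), zK, zL]
    · have cρ : phiRho (ρ1 (Kf f)) + phiRho' (ρ1 (Kf f)) * (ρf f - ρ1 (Kf f))
          ≤ phiRho (ρ1 (Lf f)) + phiRho' (ρ1 (Lf f)) * (ρf f - ρ1 (Lf f)) :=
        tangent_cmp phiRho phiRho' (phiRho_tangent_le (hρ1 (Lf f)) (hρ1 (Kf f)))
          (fun h => (hρKLtan f (Ne.symm h)).symm) (hρface₂ f hu)
      have ce : phiE γ (e1 (Kf f)) + phiE' γ (e1 (Kf f)) * (ef f - e1 (Kf f))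
          ≤ phiE γ (e1 (Lf f)) + phiE' γ (e1 (Lf f)) * (ef f - e1 (Lf f)) :=
        tangent_cmp (phiE γ) (phiE' γ) (phiE_tangent_le hγ (he1 (Lf f)) (he1 (Kf f)))
          (fun h => (heKLtan f (Ne.symm h)).symm) (heface₂ f hu)
      have hAu : 0 ≤ area f * (-uf f) := mul_nonneg (harea f).le (by linarith)
      nlinarith [mul_nonneg hAu (hρf f).le, mul_nonneg hAu (sub_nonneg.2 cρ),
        mul_nonneg (mul_nonneg hAu (hρf f).le) (sub_nonneg.2 ce), zK, zL]
  -- Step 3: sum up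
  have total : ∑ Kc : Cell, measK Kc / δt *
      ((phiRho (ρ1 Kc) + ρ1 Kc * phiE γ (e1 Kc)) - (phiRho (ρ0 Kc) + ρ0 Kc * phiE γ (e0 Kc)))
      ≤ 0 := by
    calc ∑ Kc : Cell, measK Kc / δt *
        ((phiRho (ρ1 Kc) + ρ1 Kc * phiE γ (e1 Kc)) - (phiRho (ρ0 Kc) + ρ0 Kc * phiE γ (e0 Kc)))
        ≤ ∑ Kc : Cell, ∑ f ∈ cellFaces Kf Lf Kc, g Kc f :=
          Finset.sum_le_sum fun Kc _ => cellB Kc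
      _ = ∑ f : Face, (g (Kf f) f + g (Lf f) f) := sum_swap_faces Kf Lf hKL g
      _ ≤ 0 := Finset.sum_nonpos fun f _ => faceB f
  have expand : ∑ Kc : Cell, measK Kc / δt *
      ((phiRho (ρ1 Kc) + ρ1 Kc * phiE γ (e1 Kc)) - (phiRho (ρ0 Kc) + ρ0 Kc * phiE γ (e0 Kc)))
      = ((∑ Kc : Cell, measK Kc * (phiRho (ρ1 Kc) + ρ1 Kc * phiE γ (e1 Kc)))
        - ∑ Kc : Cell, measK Kc * (phiRho (ρ0 Kc) + ρ0 Kc * phiE γ (e0 Kc))) / δt := by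
    rw [← Finset.sum_sub_distrib, Finset.sum_div]
    exact Finset.sum_congr rfl fun Kc _ => by ring
  rw [expand] at total
  have := mul_le_mul_of_nonneg_right total hδt.le
  rw [div_mul_cancel₀ _ hδt.ne', zero_mul] at this
  linarith
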